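/- arXiv:2512.17096 — 9 statements merged into one kernel-verified Lean document; each statement's English description precedes it below -/
import Mathlib

section
/- Let n ≥ 1 and let v : Fin (n+1) → EuclideanSpace ℝ (Fin n) be an affinely independent family of points all lying on the unit sphere (‖v k‖ = 1 for every k). Suppose the origin 0 is a strictly positive convex combination of the vertices, i.e. 0 = ∑_k λ_k • v_k for some weights λ_k > 0 with ∑_k λ_k = 1. Then there exists an index k such that the distance from 0 to the k-th facet hyperplane is at most 1/n, i.e. Metric.infDist 0 (affineSpan ℝ {v j : j ≠ k}) ≤ 1/n. -/
/-- If an affinely independent family of `n+1` points on the unit sphere of `ℝⁿ` has the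
origin as a strictly positive convex combination of the vertices, then some facet
hyperplane is at distance at most `1/n` from the origin. -/
theorem stmt_0 (n : ℕ) (hn : 1 ≤ n)
    (v : Fin (n + 1) → EuclideanSpace ℝ (Fin n))
    (hv : AffineIndependent ℝ v)
    (hnorm : ∀ k, ‖v k‖ = 1)
    (lam : Fin (n + 1) → ℝ)
    (hpos : ∀ k, 0 < lam k)
    (hsum : ∑ k, lam k = 1)
    (ho : (0 : EuclideanSpace ℝ (Fin n)) = ∑ k, lam k • v k) :
    ∃ k, Metric.infDist 0
        (affineSpan ℝ (v '' {j | j ≠ k}) : Set (EuclideanSpace ℝ (Fin n))) ≤ 1 / n := by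
  classical
  obtain ⟨k, -, hk⟩ := Finset.exists_min_image Finset.univ lam ⟨0, Finset.mem_univ 0⟩
  refine ⟨k, ?_⟩
  have hnR : (0:ℝ) < n := by exact_mod_cast hn
  have hle : (n + 1 : ℝ) * lam k ≤ 1 := by
    have h := Finset.card_nsmul_le_sum Finset.univ lam (lam k)
      (fun j _ => hk j (Finset.mem_univ j))
    rw [hsum] at h
    simp only [Finset.card_univ, Fintype.card_fin, nsmul_eq_mul] at h
    exact_mod_cast h
  have h1k : (0:ℝ) < 1 - lam k := by nlinarith [hpos k]
  set s : Finset (Fin (n+1)) := Finset.univ.erase k with hs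
  have hsumerase : ∑ j ∈ s, lam j = 1 - lam k := by
    have h := Finset.add_sum_erase Finset.univ lam (Finset.mem_univ k)
    rw [hsum] at h
    linarith
  set w : Fin (n+1) → ℝ := fun j => lam j / (1 - lam k) with hw
  -- subtype index
  set p : {j : Fin (n+1) // j ≠ k} → EuclideanSpace ℝ (Fin n) := fun j => v j with hp
  have hmemiff : ∀ j : Fin (n+1), j ∈ s ↔ j ≠ k := by
    intro j; simp [hs]
  have hwsum : ∑ j : {j : Fin (n+1) // j ≠ k}, w j = 1 := by
    rw [← Finset.sum_subtype s hmemiff w, hw]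
    simp only
    rw [← Finset.sum_div, hsumerase, div_self (ne_of_gt h1k)]
  have hmem : (Finset.univ : Finset {j : Fin (n+1) // j ≠ k}).affineCombination ℝ p
      (fun j => w j) ∈ affineSpan ℝ (v '' {j | j ≠ k}) := by
    have hrange : Set.range p = v '' {j | j ≠ k} := by
      rw [hp]
      rw [show (fun j : {j : Fin (n+1) // j ≠ k} => v j) = v ∘ Subtype.val from rfl,
        Set.range_comp, Subtype.range_coe_subtype]
    rw [← hrange]
    exact affineCombination_mem_affineSpan hwsum p
  have hq : (Finset.univ : Finset {j : Fin (n+1) // j ≠ k}).affineCombination ℝ p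
      (fun j => w j) = -((lam k / (1 - lam k)) • v k) := by
    rw [Finset.affineCombination_eq_linear_combination _ _ _ hwsum]
    have h1 : ∑ j : {j : Fin (n+1) // j ≠ k}, w j • p j = ∑ j ∈ s, w j • v j := by
      rw [← Finset.sum_subtype s hmemiff (fun j => w j • v j)]
    rw [h1]
    have h2 : ∑ j ∈ s, lam j • v j = -(lam k • v k) := by
      have h := Finset.add_sum_erase Finset.univ (fun j => lam j • v j) (Finset.mem_univ k)
      rw [← ho] at h
      rw [hs]
      linear_combination (norm := module) h
    calc ∑ j ∈ s, w j • v j = (1/(1 - lam k)) • ∑ j ∈ s, lam j • v j := by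
            rw [Finset.smul_sum]
            refine Finset.sum_congr rfl fun j _ => ?_
            rw [smul_smul, hw]
            congr 1
            field_simp
         _ = -((lam k / (1 - lam k)) • v k) := by
            rw [h2, smul_neg, smul_smul]
            congr 2
            field_simp
  have hdist : Metric.infDist 0
      (affineSpan ℝ (v '' {j | j ≠ k}) : Set (EuclideanSpace ℝ (Fin n)))
      ≤ lam k / (1 - lam k) := by
    have := Metric.infDist_le_dist_of_mem (x := (0 : EuclideanSpace ℝ (Fin n))) hmem
    rw [hq] at this
    calc Metric.infDist 0 (affineSpan ℝ (v '' {j | j ≠ k}) :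
            Set (EuclideanSpace ℝ (Fin n)))
        ≤ dist (0 : EuclideanSpace ℝ (Fin n)) (-((lam k / (1 - lam k)) • v k)) := this
      _ = lam k / (1 - lam k) := by
          rw [dist_zero_left, norm_neg, norm_smul, hnorm k, mul_one, Real.norm_eq_abs,
            abs_of_nonneg (div_nonneg (hpos k).le h1k.le)]
  refine hdist.trans ?_
  rw [div_le_div_iff₀ h1k hnR]
  nlinarith
end

section
/- Let n ≥ 1 and let v : Fin (n+1) → EuclideanSpace ℝ (Fin n) be an affinely independent family of points all lying on the unit sphere (‖v k‖ = 1 for every k). Suppose the origin 0 lies in the convex hull of the vertices and is equidistant from all facet hyperplanes: there is r ≥ 0 with Metric.infDist 0 (affineSpan ℝ {v j : j ≠ k}) = r for every k. Then r ≤ 1/n, and r = 1/n if and only if the simplex is regular, i.e. all edge lengths ‖v i − v j‖ (for i ≠ j) are equal. -/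
local notation "⟬" x ", " y "⟭" => @inner ℝ _ _ x y
open EuclideanGeometry Metric Finset

lemma exists_foot {n : ℕ} (hn : 1 ≤ n) (v : Fin (n+1) → EuclideanSpace ℝ (Fin n)) (k : Fin (n+1))
    (r : ℝ)
    (hd : Metric.infDist 0 (affineSpan ℝ (v '' {j | j ≠ k}) : Set (EuclideanSpace ℝ (Fin n))) = r) :
    ∃ p : EuclideanSpace ℝ (Fin n), ‖p‖ = r ∧ ∀ j, j ≠ k → ⟬p, v j⟭ = r ^ 2 := by
  have hnt : Nontrivial (Fin (n+1)) := Fin.nontrivial_iff_two_le.mpr (by omega)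
  obtain ⟨j0, hj0⟩ := exists_ne k
  set S := affineSpan ℝ (v '' {j | j ≠ k}) with hS
  haveI : Nonempty S := ⟨⟨v j0, subset_affineSpan ℝ _ ⟨j0, hj0, rfl⟩⟩⟩
  set p : EuclideanSpace ℝ (Fin n) := ((EuclideanGeometry.orthogonalProjection S 0 : S) : EuclideanSpace ℝ (Fin n)) with hp
  have hpS : p ∈ S := EuclideanGeometry.orthogonalProjection_mem 0
  have horth : ∀ x ∈ S, ⟬p, x - p⟭ = 0 := by
    intro x hx
    have h1 : x -ᵥ p ∈ S.direction := AffineSubspace.vsub_mem_direction hx hpS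
    have h2 : (0 : EuclideanSpace ℝ (Fin n)) -ᵥ p ∈ S.directionᗮ :=
      EuclideanGeometry.vsub_orthogonalProjection_mem_direction_orthogonal S 0
    have := Submodule.inner_right_of_mem_orthogonal h1 h2
    simp only [vsub_eq_sub, zero_sub, inner_neg_right] at this
    have h3 : ⟬x - p, p⟭ = 0 := by linarith
    rw [real_inner_comm] at h3; exact h3
  have hnp : ‖p‖ = r := by
    have hle : Metric.infDist 0 (S : Set (EuclideanSpace ℝ (Fin n))) ≤ dist 0 p :=
      Metric.infDist_le_dist_of_mem hpS
    have hge : dist 0 p ≤ Metric.infDist 0 (S : Set (EuclideanSpace ℝ (Fin n))) := by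
      by_contra hlt
      push_neg at hlt
      obtain ⟨x, hx, hxlt⟩ := (Metric.infDist_lt_iff ⟨p, hpS⟩).mp hlt
      refine absurd hxlt (not_lt.mpr ?_)
      have h1 : ⟬p, x - p⟭ = 0 := horth x hx
      have h2 : ‖x‖ ^ 2 = ‖x - p‖ ^ 2 + 2 * ⟬x - p, p⟭ + ‖p‖ ^ 2 := by
        have := norm_add_sq_real (x - p) p
        simpa using this
      rw [real_inner_comm] at h1
      simp only [dist_zero_left]
      nlinarith [norm_nonneg x, norm_nonneg p, norm_nonneg (x - p)]
    have : dist 0 p = r := le_antisymm (le_of_le_of_eq hge hd) (hd ▸ hle)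
    rwa [dist_zero_left] at this
  refine ⟨p, hnp, fun j hj => ?_⟩
  have h1 : ⟬p, v j - p⟭ = 0 := horth (v j) (subset_affineSpan ℝ _ ⟨j, hj, rfl⟩)
  have h2 : ⟬p, p⟭ = r ^ 2 := by rw [real_inner_self_eq_norm_sq, hnp]
  rw [inner_sub_right] at h1
  linarith


lemma regular_gram {n : ℕ} (hn : 1 ≤ n) (v : Fin (n+1) → EuclideanSpace ℝ (Fin n))
    (hv : AffineIndependent ℝ v) (hnorm : ∀ k, ‖v k‖ = 1)
    (hreg : ∀ i j i' j' : Fin (n + 1), i ≠ j → i' ≠ j' → ‖v i - v j‖ = ‖v i' - v j'‖) :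
    (∀ i j, i ≠ j → ⟬v i, v j⟭ = -(1 / (n:ℝ))) ∧ ∑ i, v i = 0 := by
  have hnR : (0:ℝ) < (n:ℝ) := by exact_mod_cast Nat.lt_of_lt_of_le Nat.zero_lt_one hn
  have hnt : Nontrivial (Fin (n+1)) := Fin.nontrivial_iff_two_le.mpr (by omega)
  obtain ⟨i0, i1, hi01⟩ := exists_pair_ne (Fin (n+1))
  set a : ℝ := ⟬v i0, v i1⟭ with ha_def
  have ha : ∀ i j, i ≠ j → ⟬v i, v j⟭ = a := by
    intro i j hij
    have e1 := norm_sub_sq_real (v i) (v j)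
    have e2 := norm_sub_sq_real (v i0) (v i1)
    have h := hreg i j i0 i1 hij hi01
    have hsq : ‖v i - v j‖ ^ 2 = ‖v i0 - v i1‖ ^ 2 := by rw [h]
    rw [hnorm i, hnorm j] at e1
    rw [hnorm i0, hnorm i1] at e2
    linarith
  have ha1 : a ≠ 1 := by
    intro h1
    have e2 := norm_sub_sq_real (v i0) (v i1)
    rw [hnorm i0, hnorm i1, ← ha_def, h1] at e2
    have : ‖v i0 - v i1‖ = 0 := by
      have h0 : ‖v i0 - v i1‖ ^ 2 = 0 := by linarith
      nlinarith [norm_nonneg (v i0 - v i1)]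
    exact hi01 (hv.injective (sub_eq_zero.mp (norm_eq_zero.mp this)))
  have hnli : ¬ LinearIndependent ℝ v := by
    intro h
    have hc := h.fintype_card_le_finrank
    rw [finrank_euclideanSpace_fin] at hc
    simp [Fintype.card_fin] at hc
  obtain ⟨μ, hμ0, i₂, hi₂⟩ := Fintype.not_linearIndependent_iff.mp hnli
  set M : ℝ := ∑ i, μ i with hM
  have hμeq : ∀ j, μ j * (1 - a) = -(a * M) := by
    intro j
    have h1 : ⟬v j, ∑ i, μ i • v i⟭ = 0 := by rw [hμ0]; simp
    rw [inner_sum] at h1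
    simp_rw [real_inner_smul_right] at h1
    have h2 : ∑ i, μ i * ⟬v j, v i⟭ =
        μ j * ⟬v j, v j⟭ + ∑ i ∈ univ.erase j, μ i * ⟬v j, v i⟭ :=
      (Finset.add_sum_erase _ _ (mem_univ j)).symm
    have h3 : ∑ i ∈ univ.erase j, μ i * ⟬v j, v i⟭ = ∑ i ∈ univ.erase j, μ i * a := by
      refine Finset.sum_congr rfl fun i hi => ?_
      rw [ha j i (Finset.ne_of_mem_erase hi).symm]
    have h4 : ∑ i ∈ univ.erase j, μ i = M - μ j := by
      have := Finset.add_sum_erase univ μ (mem_univ j)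
      linarith [this]
    have h5 : ⟬v j, v j⟭ = 1 := by
      rw [real_inner_self_eq_norm_sq, hnorm j]; norm_num
    rw [h2, h3, h5, ← Finset.sum_mul, h4] at h1
    ring_nf
    ring_nf at h1
    linarith
  have hμconst : ∀ j, μ j = μ i₂ := by
    intro j
    have h1 := hμeq j
    have h2 := hμeq i₂
    have : μ j * (1 - a) = μ i₂ * (1 - a) := by rw [h1, h2]
    exact mul_right_cancel₀ (sub_ne_zero.mpr (Ne.symm ha1)) this
  have hMc : M = (n + 1 : ℝ) * μ i₂ := by
    rw [hM]
    rw [Finset.sum_congr rfl fun j _ => hμconst j]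
    simp [Finset.card_univ, mul_comm]
  have ha_val : a = -(1 / (n:ℝ)) := by
    have h1 := hμeq i₂
    rw [hMc] at h1
    have h2 : (1 - a) = -(a * (n + 1 : ℝ)) := by
      have h3 : μ i₂ * (1 - a) = μ i₂ * (-(a * (n + 1 : ℝ))) := by ring_nf; ring_nf at h1; linarith
      exact mul_left_cancel₀ hi₂ h3
    field_simp
    linarith
  have hsumv : ∑ i, v i = 0 := by
    have h1 : ∑ i, μ i • v i = μ i₂ • ∑ i, v i := by
      rw [Finset.smul_sum]
      exact Finset.sum_congr rfl fun j _ => by rw [hμconst j]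
    rw [h1] at hμ0
    exact (smul_eq_zero.mp hμ0).resolve_left hi₂
  exact ⟨fun i j hij => (ha i j hij).trans ha_val, hsumv⟩

lemma regular_infDist {n : ℕ} (hn : 1 ≤ n) (v : Fin (n+1) → EuclideanSpace ℝ (Fin n))
    (hv : AffineIndependent ℝ v) (hnorm : ∀ k, ‖v k‖ = 1)
    (hreg : ∀ i j i' j' : Fin (n + 1), i ≠ j → i' ≠ j' → ‖v i - v j‖ = ‖v i' - v j'‖)
    (k : Fin (n+1)) :
    Metric.infDist 0 (affineSpan ℝ (v '' {j | j ≠ k}) : Set (EuclideanSpace ℝ (Fin n))) = 1 / n := by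
  obtain ⟨ha, hsum⟩ := regular_gram hn v hv hnorm hreg
  have hnR : (0:ℝ) < (n:ℝ) := by exact_mod_cast Nat.lt_of_lt_of_le Nat.zero_lt_one hn
  have hnt : Nontrivial (Fin (n+1)) := Fin.nontrivial_iff_two_le.mpr (by omega)
  obtain ⟨j0, hj0⟩ := exists_ne k
  set S := affineSpan ℝ (v '' {j | j ≠ k}) with hS
  haveI : Nonempty S := ⟨⟨v j0, subset_affineSpan ℝ _ ⟨j0, hj0, rfl⟩⟩⟩
  -- the point q = -(1/n) v k lies in S
  have hq : (-(n:ℝ)⁻¹) • v k ∈ S := by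
    classical
    let w : {j : Fin (n+1) // j ≠ k} → ℝ := fun _ => (n:ℝ)⁻¹
    have hcard : (Fintype.card {j : Fin (n+1) // j ≠ k} : ℝ) = n := by
      have : Fintype.card {j : Fin (n+1) // j ≠ k} = n := by
        simp [Fintype.card_subtype_compl]
      rw [this]
    have hw : ∑ j : {j : Fin (n+1) // j ≠ k}, w j = 1 := by
      simp only [w, Finset.sum_const, Finset.card_univ, nsmul_eq_mul]
      rw [hcard]
      field_simp
    have hmem := affineCombination_mem_affineSpan hw (fun j : {j : Fin (n+1) // j ≠ k} => v ↑j)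
    have hssub : ∑ j : {j : Fin (n+1) // j ≠ k}, v ↑j = - v k := by
      have h1 : ∑ j ∈ Finset.univ.erase k, v j = ∑ j : {j : Fin (n+1) // j ≠ k}, v ↑j :=
        Finset.sum_subtype _ (fun x => by simp [Finset.mem_erase]) v
      have h2 : v k + ∑ j ∈ Finset.univ.erase k, v j = ∑ j, v j :=
        Finset.add_sum_erase _ _ (Finset.mem_univ k)
      rw [hsum] at h2
      rw [← h1]
      exact eq_neg_of_add_eq_zero_right h2
    have hval : Finset.univ.affineCombination ℝ (fun j : {j : Fin (n+1) // j ≠ k} => v ↑j) w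
        = (-(n:ℝ)⁻¹) • v k := by
      rw [Finset.affineCombination_eq_linear_combination _ _ _ hw]
      simp only [w]
      rw [← Finset.smul_sum, hssub]
      module
    have hrange : Set.range (fun j : {j : Fin (n+1) // j ≠ k} => v ↑j) = v '' {j | j ≠ k} := by
      rw [show (fun j : {j : Fin (n+1) // j ≠ k} => v ↑j) = v ∘ Subtype.val from rfl,
        Set.range_comp, Subtype.range_coe_subtype]
    rw [hval, hrange] at hmem
    exact hmem
  -- every point of S has inner product -(1/n) with v k
  have hlow : ∀ x ∈ S, ⟬v k, x⟭ = -(n:ℝ)⁻¹ := by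
    have hle : S ≤ AffineSubspace.comap ((innerₛₗ ℝ (v k)).toAffineMap)
        (affineSpan ℝ ({-(n:ℝ)⁻¹} : Set ℝ)) := by
      rw [hS, affineSpan_le]
      rintro x ⟨j, hj, rfl⟩
      simp only [Set.mem_setOf_eq] at hj
      rw [SetLike.mem_coe, AffineSubspace.mem_comap, AffineSubspace.mem_affineSpan_singleton]
      show ⟬v k, v j⟭ = -(n:ℝ)⁻¹
      rw [ha k j (Ne.symm hj), one_div]
    intro x hx
    have h1 : x ∈ AffineSubspace.comap ((innerₛₗ ℝ (v k)).toAffineMap)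
        (affineSpan ℝ ({-(n:ℝ)⁻¹} : Set ℝ)) := hle hx
    rw [AffineSubspace.mem_comap, AffineSubspace.mem_affineSpan_singleton] at h1
    exact h1
  apply le_antisymm
  · have h1 : Metric.infDist 0 (S : Set (EuclideanSpace ℝ (Fin n))) ≤ dist (0 : EuclideanSpace ℝ (Fin n)) ((-(n:ℝ)⁻¹) • v k) := Metric.infDist_le_dist_of_mem hq
    have h2 : dist (0 : EuclideanSpace ℝ (Fin n)) ((-(n:ℝ)⁻¹) • v k) = 1 / n := by
      rw [dist_zero_left, norm_smul, hnorm k]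
      simp [abs_of_pos (inv_pos.mpr hnR), one_div]
    rw [h2] at h1
    exact h1
  · by_contra hlt
    push_neg at hlt
    obtain ⟨x, hx, hxlt⟩ := (Metric.infDist_lt_iff ⟨_, hq⟩).mp hlt
    refine absurd hxlt (not_lt.mpr ?_)
    have h1 := hlow x hx
    have h2 : |⟬v k, x⟭| ≤ ‖v k‖ * ‖x‖ := abs_real_inner_le_norm _ _
    rw [h1, hnorm k, one_mul, abs_neg, abs_of_pos (inv_pos.mpr hnR)] at h2
    rw [dist_zero_left]
    rw [one_div]
    exact h2


/-- A simplex inscribed in the unit sphere of `ℝⁿ` whose incenter is the origin has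
inradius `r ≤ 1/n`, with equality iff the simplex is regular (all edges have equal
length). -/
theorem stmt_1 (n : ℕ) (hn : 1 ≤ n)
    (v : Fin (n + 1) → EuclideanSpace ℝ (Fin n))
    (hv : AffineIndependent ℝ v)
    (hnorm : ∀ k, ‖v k‖ = 1)
    (h0 : (0 : EuclideanSpace ℝ (Fin n)) ∈ convexHull ℝ (Set.range v))
    (r : ℝ) (hr : 0 ≤ r)
    (hd : ∀ k, Metric.infDist 0
        (affineSpan ℝ (v '' {j | j ≠ k}) : Set (EuclideanSpace ℝ (Fin n))) = r) :
    r ≤ 1 / n ∧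
      (r = 1 / n ↔
        ∀ i j i' j' : Fin (n + 1), i ≠ j → i' ≠ j' → ‖v i - v j‖ = ‖v i' - v j'‖) := by
  classical
  have hnR : (0:ℝ) < (n:ℝ) := by exact_mod_cast Nat.lt_of_lt_of_le Nat.zero_lt_one hn
  -- extract convex combination weights
  rw [convexHull_range_eq_exists_affineCombination] at h0
  obtain ⟨s, w, hw0, hw1, hws⟩ := h0
  set lam : Fin (n+1) → ℝ := fun j => if j ∈ s then w j else 0 with hlam
  have hlam0 : ∀ j, 0 ≤ lam j := by
    intro j; by_cases h : j ∈ s <;> simp [hlam, h]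
    exact hw0 j h
  have hlsum : ∑ j, lam j = 1 := by
    rw [hlam]
    simp only []
    rw [Finset.sum_ite_mem, Finset.univ_inter]
    exact hw1
  have hlv : ∑ j, lam j • v j = 0 := by
    have hcomb := Finset.affineCombination_eq_linear_combination s v w hw1
    rw [hlam]
    simp only []
    simp_rw [ite_smul, zero_smul]
    rw [Finset.sum_ite_mem, Finset.univ_inter, ← hcomb, hws]
  -- the feet of perpendiculars from 0 to the facet hyperplanes
  choose p hp1 hp2 using fun k => exists_foot hn v k r (hd k)
  -- key identity
  have key : ∀ k, lam k * (r ^ 2 - ⟬p k, v k⟭) = r ^ 2 := by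
    intro k
    have h1 : ⟬p k, (0 : EuclideanSpace ℝ (Fin n))⟭ = (0:ℝ) := inner_zero_right _
    rw [← hlv, inner_sum] at h1
    simp_rw [real_inner_smul_right] at h1
    have h2 : ∑ j, lam j * ⟬p k, v j⟭ =
        lam k * ⟬p k, v k⟭ + ∑ j ∈ Finset.univ.erase k, lam j * ⟬p k, v j⟭ :=
      (Finset.add_sum_erase _ _ (Finset.mem_univ k)).symm
    have h3 : ∑ j ∈ Finset.univ.erase k, lam j * ⟬p k, v j⟭ =
        ∑ j ∈ Finset.univ.erase k, lam j * r ^ 2 := by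
      refine Finset.sum_congr rfl fun j hj => ?_
      rw [hp2 k j (Finset.ne_of_mem_erase hj)]
    have h4 : ∑ j ∈ Finset.univ.erase k, lam j = 1 - lam k := by
      have := Finset.add_sum_erase Finset.univ lam (Finset.mem_univ k)
      rw [hlsum] at this
      linarith
    rw [h2, h3, ← Finset.sum_mul, h4] at h1
    ring_nf
    ring_nf at h1
    linarith
  -- lower bound for the weights when r > 0
  have hlamge : 0 < r → ∀ k, r / (r + 1) ≤ lam k := by
    intro hrpos k
    have ht : -r ≤ ⟬p k, v k⟭ := by
      have habs := abs_real_inner_le_norm (p k) (v k)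
      rw [hp1 k, hnorm k, mul_one] at habs
      linarith [neg_abs_le (⟬p k, v k⟭ : ℝ)]
    have hk := key k
    have hpos : (0:ℝ) < r ^ 2 := by positivity
    have h2 : 0 < r ^ 2 - ⟬p k, v k⟭ := by
      rcases le_or_gt (r ^ 2 - ⟬p k, v k⟭) 0 with h | h
      · nlinarith [hlam0 k]
      · exact h
    have h3 : r ^ 2 - ⟬p k, v k⟭ ≤ r ^ 2 + r := by linarith
    rw [div_le_iff₀ (by linarith : (0:ℝ) < r + 1)]
    nlinarith [mul_nonneg (hlam0 k) (by linarith : (0:ℝ) ≤ r ^ 2 + r - (r ^ 2 - ⟬p k, v k⟭))]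
  -- the inequality
  have hineq : r ≤ 1 / n := by
    rcases hr.eq_or_lt with h | hrpos
    · rw [← h]; positivity
    · have hsum_ge : ((n:ℝ) + 1) * (r / (r + 1)) ≤ 1 := by
        have h1 : ∑ _k : Fin (n+1), r / (r + 1) ≤ ∑ k, lam k :=
          Finset.sum_le_sum fun k _ => hlamge hrpos k
        rw [hlsum] at h1
        rw [Finset.sum_const, Finset.card_univ, Fintype.card_fin, nsmul_eq_mul] at h1
        push_cast at h1
        linarith
      have hr1 : (0:ℝ) < r + 1 := by linarith
      rw [le_div_iff₀ hnR]
      rw [← mul_div_assoc, div_le_one hr1] at hsum_ge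
      nlinarith
  refine ⟨hineq, ?_, ?_⟩
  · -- equality implies regular
    intro hre
    have hrpos : 0 < r := by rw [hre]; positivity
    have hnr : (n:ℝ) * r = 1 := by rw [hre]; field_simp
    have hge : ∀ k, 1 / ((n:ℝ) + 1) ≤ lam k := by
      intro k
      have h1 := hlamge hrpos k
      have h2 : r / (r + 1) = 1 / ((n:ℝ) + 1) := by
        rw [hre]; field_simp; ring
      rwa [h2] at h1
    have hlameq : ∀ k, lam k = 1 / ((n:ℝ) + 1) := by
      by_contra hne
      push_neg at hne
      obtain ⟨k0, hk0⟩ := hne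
      have hlt : 1 / ((n:ℝ) + 1) < lam k0 := lt_of_le_of_ne (hge k0) (Ne.symm hk0)
      have hsum_lt : ∑ _k : Fin (n+1), 1 / ((n:ℝ) + 1) < ∑ k, lam k :=
        Finset.sum_lt_sum (fun k _ => hge k) ⟨k0, Finset.mem_univ k0, hlt⟩
      rw [hlsum, Finset.sum_const, Finset.card_univ, Fintype.card_fin, nsmul_eq_mul] at hsum_lt
      push_cast at hsum_lt
      rw [mul_one_div, div_self (by linarith : (n:ℝ) + 1 ≠ 0)] at hsum_lt
      exact lt_irrefl 1 hsum_lt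
    have hinner_kk : ∀ k, ⟬p k, v k⟭ = -r := by
      intro k
      have h6 := key k
      rw [hlameq k] at h6
      set t := (⟬p k, v k⟭ : ℝ) with ht
      have hne : ((n:ℝ) + 1) ≠ 0 := by positivity
      have h7 : r ^ 2 - t = ((n:ℝ) + 1) * r ^ 2 := by
        have h9 : ((n:ℝ) + 1) * (1 / ((n:ℝ) + 1) * (r ^ 2 - t)) = ((n:ℝ) + 1) * r ^ 2 := by
          rw [h6]
        rw [← mul_assoc, mul_one_div, div_self hne, one_mul] at h9
        exact h9
      have h8 : (n:ℝ) * r ^ 2 = r := by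
        have : (n:ℝ) * r ^ 2 = ((n:ℝ) * r) * r := by ring
        rw [this, hnr, one_mul]
      nlinarith
    have hpk : ∀ k, p k = r • (-(v k)) := by
      intro k
      have hcs : ⟬p k, -(v k)⟭ = ‖p k‖ * ‖-(v k)‖ := by
        rw [inner_neg_right, hinner_kk k, hp1 k, norm_neg, hnorm k, mul_one, neg_neg]
      have heq := inner_eq_norm_mul_iff_real.mp hcs
      rw [norm_neg, hnorm k, hp1 k, one_smul] at heq
      exact heq
    have hvv : ∀ i j, i ≠ j → ⟬v i, v j⟭ = -r := by
      intro i j hij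
      have h1 := hp2 i j (Ne.symm hij)
      rw [hpk i] at h1
      rw [real_inner_smul_left, inner_neg_left] at h1
      set t := (⟬v i, v j⟭ : ℝ) with ht
      have hr2 : r ≠ 0 := ne_of_gt hrpos
      have h2 : r * (-t) = r * r := by rw [h1]; ring
      have h3 : -t = r := mul_left_cancel₀ hr2 h2
      linarith
    intro i j i' j' hij hij'
    rw [← Real.sqrt_sq (norm_nonneg (v i - v j)), ← Real.sqrt_sq (norm_nonneg (v i' - v j'))]
    congr 1
    have e1 := norm_sub_sq_real (v i) (v j)
    have e2 := norm_sub_sq_real (v i') (v j')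
    rw [hnorm i, hnorm j, hvv i j hij] at e1
    rw [hnorm i', hnorm j', hvv i' j' hij'] at e2
    linarith
  · -- regular implies equality
    intro hreg
    have h1 := regular_infDist hn v hv hnorm hreg 0
    rw [hd 0] at h1
    exact h1
end

section
/- Let n ≥ 1, let v : Fin (n+1) → EuclideanSpace ℝ (Fin n) satisfy ‖v k‖ = 1 for all k, and suppose 0 = ∑_k λ_k • v_k where λ_k > 0 for all k and ∑_k λ_k = 1. Then for every index k, the distance from the origin to the k-th facet hyperplane satisfies Metric.infDist 0 (affineSpan ℝ {v j : j ≠ k}) ≤ λ_k / (1 − λ_k). -/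
/-- Barycentric bound: if the origin is the convex combination `∑ λ_k • v_k` of points
on the unit sphere, the distance from the origin to the `k`-th facet hyperplane is at
most `λ_k / (1 - λ_k)`. -/
theorem stmt_2 (n : ℕ) (hn : 1 ≤ n)
    (v : Fin (n + 1) → EuclideanSpace ℝ (Fin n))
    (hnorm : ∀ k, ‖v k‖ = 1)
    (lam : Fin (n + 1) → ℝ)
    (hpos : ∀ k, 0 < lam k)
    (hsum : ∑ k, lam k = 1)
    (ho : (0 : EuclideanSpace ℝ (Fin n)) = ∑ k, lam k • v k) :
    ∀ k, Metric.infDist 0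
        (affineSpan ℝ (v '' {j | j ≠ k}) : Set (EuclideanSpace ℝ (Fin n)))
      ≤ lam k / (1 - lam k) := by
  intro k
  set s : Finset (Fin (n + 1)) := Finset.univ.erase k with hs
  -- there is another index
  have hcard : 1 < Fintype.card (Fin (n + 1)) := by simp; omega
  obtain ⟨j, hjk⟩ := Fintype.exists_ne_of_one_lt_card hcard k
  have hsum' : ∑ i ∈ s, lam i = 1 - lam k := by
    have := Finset.sum_erase_add Finset.univ lam (Finset.mem_univ k)
    rw [hsum] at this; linarith
  have hlt : lam k < 1 := by
    have hjs : j ∈ s := Finset.mem_erase.2 ⟨hjk, Finset.mem_univ j⟩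
    have : 0 < ∑ i ∈ s, lam i :=
      Finset.sum_pos (fun i _ => hpos i) ⟨j, hjs⟩
    linarith
  have hden : (0:ℝ) < 1 - lam k := by linarith
  set w : Fin (n + 1) → ℝ := fun i => lam i / (1 - lam k) with hw
  have hwsum : ∑ i ∈ s, w i = 1 := by
    rw [hw]
    rw [← Finset.sum_div, hsum', div_self hden.ne']
  have hmem : s.affineCombination ℝ v w ∈ affineSpan ℝ (v '' {j | j ≠ k}) := by
    have hwsum2 : ∑ i : {j : Fin (n+1) // j ≠ k}, w i.1 = 1 := by
      rw [← hwsum, hs]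
      exact (Finset.sum_subtype (p := fun j => j ≠ k) (Finset.univ.erase k)
        (fun i => by simp) (fun i => w i)).symm
    have h := affineCombination_mem_affineSpan hwsum2 (fun i : {j : Fin (n+1) // j ≠ k} => v i.1)
    have hrange : Set.range (fun i : {j : Fin (n+1) // j ≠ k} => v i.1) = v '' {j | j ≠ k} := by
      ext x
      simp [Set.mem_image]
    rw [hrange] at h
    have hco : (Finset.univ.affineCombination ℝ (fun i : {j : Fin (n+1) // j ≠ k} => v i.1)
        (fun i => w i.1)) = s.affineCombination ℝ v w := by
      rw [Finset.affineCombination_eq_linear_combination _ _ _ hwsum2,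
        Finset.affineCombination_eq_linear_combination _ _ _ hwsum, hs]
      exact (Finset.sum_subtype (p := fun j => j ≠ k) (Finset.univ.erase k)
        (fun i => by simp) (fun i => w i • v i)).symm
    rwa [hco] at h
  have hcomb : s.affineCombination ℝ v w = ∑ i ∈ s, w i • v i := by
    rw [Finset.affineCombination_eq_linear_combination _ _ _ hwsum]
  have hsum2 : ∑ i ∈ s, lam i • v i = -(lam k • v k) := by
    have := Finset.sum_erase_add Finset.univ (fun i => lam i • v i)
      (Finset.mem_univ k)
    rw [← ho] at this
    exact eq_neg_of_add_eq_zero_left this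
  have hval : s.affineCombination ℝ v w = (-(lam k) / (1 - lam k)) • v k := by
    rw [hcomb]
    have : ∑ i ∈ s, w i • v i = (1 / (1 - lam k)) • ∑ i ∈ s, lam i • v i := by
      rw [Finset.smul_sum]
      refine Finset.sum_congr rfl fun i _ => ?_
      rw [smul_smul, hw]
      ring_nf
    rw [this, hsum2, smul_neg, ← neg_smul, smul_smul]
    ring_nf
  refine le_trans (Metric.infDist_le_dist_of_mem hmem) ?_
  rw [hval, dist_zero_left, norm_smul, hnorm k, mul_one, Real.norm_eq_abs,
    abs_div, abs_neg, abs_of_pos (hpos k), abs_of_pos hden]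
end

section
/- Let n ≥ 1, let v : Fin (n+1) → EuclideanSpace ℝ (Fin n) satisfy ‖v k‖ = 1 for all k, and suppose 0 = ∑_k λ_k • v_k where λ_k > 0 for all k and ∑_k λ_k = 1. If for some index k the equality Metric.infDist 0 (affineSpan ℝ {v j : j ≠ k}) = λ_k / (1 − λ_k) holds, then v_k is orthogonal to the direction of the k-th facet hyperplane: for all indices i, j different from k, the inner product ⟪v k, v i − v j⟫ = 0. -/
private lemma aux_min_inner (a b : ℝ) (hb : 0 ≤ b)
    (h : ∀ t : ℝ, 0 ≤ 2 * t * a + t ^ 2 * b) : a = 0 := by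
  by_contra ha
  have hb1 : (0:ℝ) < b + 1 := by linarith
  have h1 := h (-a / (b + 1))
  have ha2 : 0 < a ^ 2 := by positivity
  have h2 : 0 ≤ (2 * (-a / (b + 1)) * a + (-a / (b + 1)) ^ 2 * b) * (b + 1) ^ 2 :=
    mul_nonneg h1 (by positivity)
  have h3 : (2 * (-a / (b + 1)) * a + (-a / (b + 1)) ^ 2 * b) * (b + 1) ^ 2
      = -a ^ 2 * (b + 2) := by
    field_simp
    ring
  rw [h3] at h2
  nlinarith

/-- Equality analysis: if the distance from the origin to the `k`-th facet hyperplane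
equals `λ_k / (1 - λ_k)`, then `v k` is orthogonal to the direction of that facet
hyperplane. -/
theorem stmt_3 (n : ℕ) (hn : 1 ≤ n)
    (v : Fin (n + 1) → EuclideanSpace ℝ (Fin n))
    (hnorm : ∀ k, ‖v k‖ = 1)
    (lam : Fin (n + 1) → ℝ)
    (hpos : ∀ k, 0 < lam k)
    (hsum : ∑ k, lam k = 1)
    (ho : (0 : EuclideanSpace ℝ (Fin n)) = ∑ k, lam k • v k)
    (k : Fin (n + 1))
    (heq : Metric.infDist 0
        (affineSpan ℝ (v '' {j | j ≠ k}) : Set (EuclideanSpace ℝ (Fin n)))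
      = lam k / (1 - lam k)) :
    ∀ i j : Fin (n + 1), i ≠ k → j ≠ k → (inner ℝ (v k) (v i - v j) : ℝ) = 0 := by
  intro i j hi hj
  set S : AffineSubspace ℝ (EuclideanSpace ℝ (Fin n)) := affineSpan ℝ (v '' {j | j ≠ k})
    with hSdef
  -- λ_k < 1
  have hklt : lam k < 1 := by
    have : Nontrivial (Fin (n + 1)) := by
      refine Fin.nontrivial_iff_two_le.mpr (by omega)
    obtain ⟨i0, hi0⟩ := exists_ne k
    have hmem : i0 ∈ Finset.univ.erase k := Finset.mem_erase.mpr ⟨hi0, Finset.mem_univ _⟩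
    have h1 : lam i0 ≤ ∑ m ∈ Finset.univ.erase k, lam m :=
      Finset.single_le_sum (fun m _ => (hpos m).le) hmem
    have h2 : lam k + ∑ m ∈ Finset.univ.erase k, lam m = ∑ m, lam m :=
      Finset.add_sum_erase _ _ (Finset.mem_univ k)
    have := hpos i0
    linarith [hsum ▸ h2]
  have h1k : (0:ℝ) < 1 - lam k := by linarith
  -- the rest of the convex combination
  have hrest : ∑ m ∈ Finset.univ.erase k, lam m • v m = -(lam k • v k) := by
    have h2 := Finset.add_sum_erase Finset.univ (fun m => lam m • v m)
      (Finset.mem_univ k)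
    rw [← ho] at h2
    linear_combination (norm := abel) h2
  have hrestsum : ∑ m ∈ Finset.univ.erase k, lam m = 1 - lam k := by
    have h2 : lam k + ∑ m ∈ Finset.univ.erase k, lam m = ∑ m, lam m :=
      Finset.add_sum_erase _ _ (Finset.mem_univ k)
    rw [hsum] at h2; linarith
  -- The candidate closest point
  set p : EuclideanSpace ℝ (Fin n) := (-(lam k) / (1 - lam k)) • v k with hpdef
  -- p lies in the facet hyperplane
  have hpS : p ∈ S := by
    let ι := {m : Fin (n + 1) // m ≠ k}
    let u : ι → EuclideanSpace ℝ (Fin n) := fun m => v m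
    have hrange : Set.range u = v '' {j | j ≠ k} := by
      ext x
      constructor
      · rintro ⟨⟨m, hm⟩, rfl⟩; exact ⟨m, hm, rfl⟩
      · rintro ⟨m, hm, rfl⟩; exact ⟨⟨m, hm⟩, rfl⟩
    let w : ι → ℝ := fun m => lam m / (1 - lam k)
    have hsub : ∀ (f : Fin (n + 1) → ℝ),
        ∑ m ∈ Finset.univ.erase k, f m = ∑ m : ι, f m := by
      intro f
      exact Finset.sum_subtype (Finset.univ.erase k) (by simp) f
    have hsubE : ∀ (f : Fin (n + 1) → EuclideanSpace ℝ (Fin n)),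
        ∑ m ∈ Finset.univ.erase k, f m = ∑ m : ι, f m := by
      intro f
      exact Finset.sum_subtype (Finset.univ.erase k) (by simp) f
    have hw : ∑ m : ι, w m = 1 := by
      have : ∑ m : ι, w m = (∑ m ∈ Finset.univ.erase k, lam m) / (1 - lam k) := by
        rw [hsub lam, Finset.sum_div]
      rw [this, hrestsum, div_self h1k.ne']
    have hmem := affineCombination_mem_affineSpan (k := ℝ) hw u
    have hval : (Finset.univ : Finset ι).affineCombination ℝ u w = p := by
      rw [Finset.affineCombination_eq_linear_combination _ _ _ hw]
      have : ∑ m : ι, w m • u m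
          = (1 - lam k)⁻¹ • ∑ m ∈ Finset.univ.erase k, lam m • v m := by
        rw [hsubE (fun m => lam m • v m), Finset.smul_sum]
        refine Finset.sum_congr rfl fun m _ => ?_
        rw [smul_smul]
        congr 1
        field_simp [w]
        exact div_mul_cancel₀ (lam m) h1k.ne'
      rw [this, hrest, hpdef, smul_neg, smul_smul]
      rw [← neg_smul]
      congr 1
      field_simp
    rw [hval, hrange] at hmem
    exact hmem
  -- norm of p
  have hnp : ‖p‖ = lam k / (1 - lam k) := by
    rw [hpdef, norm_smul, hnorm k, mul_one, Real.norm_eq_abs, abs_div,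
      abs_of_pos h1k, abs_of_neg (neg_neg_iff_pos.mpr (hpos k)), neg_neg]
  -- p is a distance minimizer
  have hmin : ∀ q ∈ (S : Set (EuclideanSpace ℝ (Fin n))), ‖p‖ ≤ ‖q‖ := by
    intro q hq
    have h1 := Metric.infDist_le_dist_of_mem (x := (0 : EuclideanSpace ℝ (Fin n))) hq
    rw [dist_zero_left] at h1
    rw [hnp, ← heq]
    exact h1
  -- direction vector
  have hvi : v i ∈ S := subset_affineSpan ℝ _ ⟨i, hi, rfl⟩
  have hvj : v j ∈ S := subset_affineSpan ℝ _ ⟨j, hj, rfl⟩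
  have hw0 : v i - v j ∈ S.direction := by
    have := AffineSubspace.vsub_mem_direction hvi hvj
    simpa [vsub_eq_sub] using this
  set w0 : EuclideanSpace ℝ (Fin n) := v i - v j with hw0def
  -- key inequality for all t
  have key : ∀ t : ℝ, 0 ≤ 2 * t * (inner ℝ w0 p : ℝ) + t ^ 2 * ‖w0‖ ^ 2 := by
    intro t
    have hqS : t • w0 + p ∈ S := by
      have := AffineSubspace.vadd_mem_of_mem_direction
        (S.direction.smul_mem t hw0) hpS
      simpa [vadd_eq_add] using this
    have hle := hmin _ hqS
    have h2 : ‖p‖ ^ 2 ≤ ‖t • w0 + p‖ ^ 2 :=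
      pow_le_pow_left₀ (norm_nonneg p) hle 2
    rw [norm_add_sq_real, real_inner_smul_left] at h2
    have h3 : ‖t • w0‖ ^ 2 = t ^ 2 * ‖w0‖ ^ 2 := by
      rw [norm_smul, mul_pow, Real.norm_eq_abs, sq_abs]
    rw [h3] at h2
    linarith
  have ha : (inner ℝ w0 p : ℝ) = 0 := aux_min_inner _ _ (sq_nonneg _) key
  rw [hpdef, real_inner_smul_right] at ha
  have hc : -(lam k) / (1 - lam k) ≠ 0 := by
    apply div_ne_zero _ h1k.ne'
    exact neg_ne_zero.mpr (hpos k).ne'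
  have : (inner ℝ w0 (v k) : ℝ) = 0 := by
    rcases mul_eq_zero.mp ha with h | h
    · exact absurd h hc
    · exact h
  rw [hw0def] at this
  rw [real_inner_comm]
  exact this
end

section
/- Let V be a real vector space, B : V →ₗ[ℝ] V →ₗ[ℝ] ℝ a symmetric bilinear form, and δ > 0 a real number. Let o, u, w ∈ V satisfy B o o = 1, B u u = −1, B w w = −1, B o u = Real.sinh δ and B o w = Real.sinh δ. Define u′ = (Real.cosh δ)⁻¹ • o + (Real.tanh δ) • u and w′ = (Real.cosh δ)⁻¹ • o + (Real.tanh δ) • w. Then B u′ w′ = 1 + (Real.tanh δ)² * (1 + B u w). -/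
/-- The identity `⟨v_i' ∣ v_j'⟩ = 1 + tanh²(δ)(1 + ⟨v_i⋆ ∣ v_j⋆⟩)` for the tangency
points of the inscribed sphere, in Minkowski space with symmetric bilinear form `B`. -/
theorem stmt_14 {V : Type*} [AddCommGroup V] [Module ℝ V]
    (B : V →ₗ[ℝ] V →ₗ[ℝ] ℝ) (hB : ∀ x y, B x y = B y x)
    (δ : ℝ) (hδ : 0 < δ) (o u w : V)
    (hoo : B o o = 1) (huu : B u u = -1) (hww : B w w = -1)
    (hou : B o u = Real.sinh δ) (how : B o w = Real.sinh δ) :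
    B ((Real.cosh δ)⁻¹ • o + Real.tanh δ • u)
        ((Real.cosh δ)⁻¹ • o + Real.tanh δ • w)
      = 1 + Real.tanh δ ^ 2 * (1 + B u w) := by
  have huo : B u o = Real.sinh δ := by rw [hB]; exact hou
  have hc : Real.cosh δ ≠ 0 := (Real.cosh_pos δ).ne'
  have hpyth : Real.cosh δ ^ 2 - Real.sinh δ ^ 2 = 1 := Real.cosh_sq_sub_sinh_sq δ
  simp only [map_add, map_smul, LinearMap.add_apply, LinearMap.smul_apply, smul_eq_mul,
    hoo, huu, hww, hou, how, huo, Real.tanh_eq_sinh_div_cosh]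
  field_simp
  ring_nf
  nlinarith [Real.cosh_pos δ, sq_nonneg (Real.cosh δ)]
end

section
/- Let n ≥ 1 and let v : Fin (n+1) → EuclideanSpace ℝ (Fin n) be an affinely independent family. Then there exists a unique point p in the convex hull of {v k : k} such that the distances from p to all facet hyperplanes are equal: for all indices i and j, Metric.infDist p (affineSpan ℝ {v l : l ≠ i}) = Metric.infDist p (affineSpan ℝ {v l : l ≠ j}). -/
open Metric Finset

lemma infDist_hyperplane' {n : ℕ} (u : EuclideanSpace ℝ (Fin n)) (hu : u ≠ 0) (c : ℝ)
    (p : EuclideanSpace ℝ (Fin n)) :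
    Metric.infDist p {x | inner ℝ u x = c} = |inner ℝ u p - c| / ‖u‖ := by
  have hn : (0:ℝ) < ‖u‖ := norm_pos_iff.mpr hu
  have hn2 : ‖u‖ ^ 2 ≠ 0 := by positivity
  set S : Set (EuclideanSpace ℝ (Fin n)) := {x | inner ℝ u x = c} with hS
  have hq : p - ((inner ℝ u p - c) / ‖u‖ ^ 2) • u ∈ S := by
    simp only [hS, Set.mem_setOf_eq, inner_sub_right, real_inner_smul_right,
      real_inner_self_eq_norm_sq]
    field_simp
    ring
  refine le_antisymm ?_ ?_
  · calc Metric.infDist p S ≤ dist p (p - ((inner ℝ u p - c) / ‖u‖ ^ 2) • u) :=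
        Metric.infDist_le_dist_of_mem hq
      _ = |inner ℝ u p - c| / ‖u‖ := by
        rw [dist_eq_norm, sub_sub_cancel, norm_smul, Real.norm_eq_abs, abs_div]
        rw [abs_of_nonneg (by positivity : (0:ℝ) ≤ ‖u‖ ^ 2)]
        rw [sq]
        field_simp
  · haveI : Nonempty S := ⟨⟨_, hq⟩⟩
    rw [Metric.infDist_eq_iInf]
    refine le_ciInf fun ⟨y, hy⟩ => ?_
    rw [div_le_iff₀ hn]
    have : inner ℝ u p - c = inner ℝ u (p - y) := by
      simp only [hS, Set.mem_setOf_eq] at hy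
      rw [inner_sub_right, hy]
    rw [this, dist_eq_norm]
    calc |(inner ℝ u (p - y) : ℝ)| ≤ ‖u‖ * ‖p - y‖ := abs_real_inner_le_norm u (p - y)
      _ = ‖p - y‖ * ‖u‖ := mul_comm _ _

/-- Existence and uniqueness of the incenter: a Euclidean simplex has a unique point of
its convex hull equidistant from all facet hyperplanes. -/
theorem stmt_16 (n : ℕ) (hn : 1 ≤ n)
    (v : Fin (n + 1) → EuclideanSpace ℝ (Fin n))
    (hv : AffineIndependent ℝ v) :
    ∃! p : EuclideanSpace ℝ (Fin n),
      p ∈ convexHull ℝ (Set.range v) ∧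
        ∀ i j : Fin (n + 1),
          Metric.infDist p (affineSpan ℝ (v '' {l | l ≠ i}) : Set (EuclideanSpace ℝ (Fin n)))
            = Metric.infDist p
                (affineSpan ℝ (v '' {l | l ≠ j}) : Set (EuclideanSpace ℝ (Fin n))) := by
  classical
  have htop : affineSpan ℝ (Set.range v) = ⊤ := by
    rw [hv.affineSpan_eq_top_iff_card_eq_finrank_add_one]
    simp [finrank_euclideanSpace_fin]
  let b : AffineBasis (Fin (n + 1)) ℝ (EuclideanSpace ℝ (Fin n)) := ⟨v, hv, htop⟩
  have hb : ⇑b = v := rfl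
  have hcoordv : ∀ i j, b.coord i (v j) = if i = j then 1 else 0 := fun i j =>
    b.coord_apply i j
  -- membership characterization of facet hyperplanes
  have hmem : ∀ (i : Fin (n + 1)) (x : EuclideanSpace ℝ (Fin n)),
      x ∈ affineSpan ℝ (v '' {l | l ≠ i}) ↔ b.coord i x = 0 := by
    intro i x
    rw [Set.image_eq_range]
    constructor
    · intro hx
      obtain ⟨w, hw1, rfl⟩ := eq_affineCombination_of_mem_affineSpan_of_fintype hx
      rw [Finset.map_affineCombination _ _ _ hw1 (b.coord i)]
      have : (⇑(b.coord i) ∘ fun l : {l : Fin (n+1) // l ∈ {l | l ≠ i}} => v ↑l)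
          = fun _ => (0:ℝ) := by
        funext l
        simp only [Function.comp_apply, hcoordv]
        rw [if_neg (fun h => l.2 h.symm)]
      rw [this, Finset.affineCombination_apply_const _ _ _ hw1]
    · intro hx
      have hwsum : ∑ l, b.coord l x = 1 := b.sum_coord_apply_eq_one x
      have hsub : ∑ l : {l : Fin (n+1) // l ∈ {l | l ≠ i}}, b.coord ↑l x = 1 := by
        rw [← Finset.sum_subtype (Finset.univ.erase i)
          (fun y => by simp [Finset.mem_erase]) (fun l => b.coord l x)]
        rw [Finset.sum_erase_eq_sub (Finset.mem_univ i), hwsum, hx, sub_zero]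
      have hx' : Finset.univ.affineCombination ℝ
          (fun l : {l : Fin (n+1) // l ∈ {l | l ≠ i}} => v ↑l)
          (fun l => b.coord ↑l x) ∈ affineSpan ℝ
            (Set.range fun l : {l : Fin (n+1) // l ∈ {l | l ≠ i}} => v ↑l) :=
        affineCombination_mem_affineSpan hsub _
      have key : Finset.univ.affineCombination ℝ
          (fun l : {l : Fin (n+1) // l ∈ {l | l ≠ i}} => v ↑l)
          (fun l => b.coord ↑l x) = x := by
        have h1 := Finset.affineCombination_subtype_eq_filter (k := ℝ) Finset.univ
          (fun l => b.coord l x) v (fun l => l ∈ {l | l ≠ i})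
        rw [Finset.subtype_univ] at h1
        rw [h1]
        have h2 : (Finset.filter (fun l => l ∈ {l | l ≠ i}) Finset.univ)
            = Finset.univ.erase i := Finset.filter_ne' Finset.univ i
        rw [h2]
        have h3 := Finset.affineCombination_indicator_subset (fun l => b.coord l x) v
          (Finset.erase_subset i Finset.univ)
        rw [h3]
        have h4 : Set.indicator ↑(Finset.univ.erase i) (fun l => b.coord l x)
            = fun l => b.coord l x := by
          funext l
          by_cases hl : l = i
          · subst hl
            simp [Set.indicator_apply, hx]
          · simp [Set.indicator_apply, hl]
        rw [h4]
        conv_rhs => rw [← b.affineCombination_coord_eq_self x]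
        rw [hb]
      rwa [key] at hx'
  -- distance formula for facet hyperplanes
  have key : ∀ i : Fin (n + 1), ∃ D : ℝ, 0 < D ∧ ∀ p : EuclideanSpace ℝ (Fin n),
      Metric.infDist p (affineSpan ℝ (v '' {l | l ≠ i}) : Set (EuclideanSpace ℝ (Fin n)))
        = |b.coord i p| * D := by
    intro i
    set f := b.coord i with hf
    let g : EuclideanSpace ℝ (Fin n) →L[ℝ] ℝ := LinearMap.toContinuousLinearMap f.linear
    let u : EuclideanSpace ℝ (Fin n) := (InnerProductSpace.toDual ℝ _).symm g
    have hu_inner : ∀ x : EuclideanSpace ℝ (Fin n), (inner ℝ u x : ℝ) = f.linear x := fun x =>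
      InnerProductSpace.toDual_symm_apply
    obtain ⟨j, hj⟩ : ∃ j : Fin (n + 1), j ≠ i := by
      haveI : Nontrivial (Fin (n + 1)) := Fin.nontrivial_iff_two_le.mpr (by omega)
      exact exists_ne i
    have hlin1 : f.linear (v i - v j) = 1 := by
      have := f.linearMap_vsub (v i) (v j)
      simp only [vsub_eq_sub] at this
      rw [this, hf, hcoordv, hcoordv, if_pos rfl, if_neg (Ne.symm hj)]
      norm_num
    have hu : u ≠ 0 := by
      intro h
      have := hu_inner (v i - v j)
      rw [h, inner_zero_left, hlin1] at this
      norm_num at this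
    refine ⟨‖u‖⁻¹, inv_pos.mpr (norm_pos_iff.mpr hu), fun p => ?_⟩
    have hset : (affineSpan ℝ (v '' {l | l ≠ i}) : Set (EuclideanSpace ℝ (Fin n)))
        = {x | inner ℝ u x = -(f 0)} := by
      ext x
      rw [SetLike.mem_coe, hmem i x, Set.mem_setOf_eq, hu_inner]
      have hdx : f x = f.linear x + f 0 := by
        conv_lhs => rw [f.decomp]
        rfl
      constructor
      · intro h; rw [hdx] at h; linarith
      · intro h; rw [hdx]; linarith
    rw [hset, infDist_hyperplane' u hu _ p, hu_inner, div_eq_mul_inv]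
    congr 2
    have hdx : f p = f.linear p + f 0 := by
      conv_lhs => rw [f.decomp]
      rfl
    rw [hdx]; ring
  choose D hDpos hdist using key
  set S : ℝ := ∑ j, (D j)⁻¹ with hSdef
  have hSpos : 0 < S :=
    Finset.sum_pos (fun j _ => inv_pos.mpr (hDpos j)) Finset.univ_nonempty
  set w : Fin (n + 1) → ℝ := fun i => (D i)⁻¹ / S with hwdef
  have hw1 : ∑ i, w i = 1 := by
    rw [hwdef]
    simp only
    rw [← Finset.sum_div, ← hSdef, div_self (ne_of_gt hSpos)]
  have hw0 : ∀ i, 0 ≤ w i := fun i =>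
    div_nonneg (inv_nonneg.mpr (hDpos i).le) hSpos.le
  set p : EuclideanSpace ℝ (Fin n) := Finset.univ.affineCombination ℝ v w with hpdef
  have hcoordp : ∀ i, b.coord i p = w i := fun i =>
    b.coord_apply_combination_of_mem (Finset.mem_univ i) hw1
  have hull_char : convexHull ℝ (Set.range v)
      = {x : EuclideanSpace ℝ (Fin n) | ∀ i, 0 ≤ b.coord i x} := by
    rw [← hb]; exact b.convexHull_eq_nonneg_coord
  refine ⟨p, ⟨?_, ?_⟩, ?_⟩
  · rw [hull_char]
    intro i
    rw [hcoordp]; exact hw0 i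
  · intro i j
    rw [hdist i p, hdist j p, hcoordp, hcoordp,
      abs_of_nonneg (hw0 i), abs_of_nonneg (hw0 j), hwdef]
    have hdi := hDpos i; have hdj := hDpos j
    field_simp
  · rintro q ⟨hq_hull, hq_eq⟩
    rw [hull_char] at hq_hull
    have habs : ∀ i, |b.coord i q| = b.coord i q := fun i => abs_of_nonneg (hq_hull i)
    have hconst : ∀ i, b.coord i q * D i = b.coord 0 q * D 0 := by
      intro i
      have := hq_eq i 0
      rw [hdist i q, hdist 0 q, habs, habs] at this
      exact this
    have hsum : (b.coord 0 q * D 0) * S = 1 := by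
      have h5 : ∑ i, b.coord i q = 1 := b.sum_coord_apply_eq_one q
      calc (b.coord 0 q * D 0) * S = ∑ i, (b.coord 0 q * D 0) * (D i)⁻¹ := by
            rw [← Finset.mul_sum]
        _ = ∑ i, b.coord i q := by
            refine Finset.sum_congr rfl fun i _ => ?_
            rw [← hconst i, mul_assoc, mul_inv_cancel₀ (ne_of_gt (hDpos i)), mul_one]
        _ = 1 := h5
    have hcoordq : ∀ i, b.coord i q = w i := by
      intro i
      have hDi : D i ≠ 0 := (hDpos i).ne'
      have hS' : S ≠ 0 := hSpos.ne'
      have h1 : b.coord i q * D i * S = 1 := by rw [hconst i]; exact hsum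
      rw [hwdef]
      simp only
      field_simp
      linear_combination h1
    exact b.ext_elem fun i => by rw [hcoordq i, hcoordp i]
end

section
/- Let n ≥ 1 and let v : Fin (n+1) → EuclideanSpace ℝ (Fin n) be an affinely independent family. Suppose p lies in the convex hull of {v k : k} and there is r ≥ 0 such that Metric.infDist p (affineSpan ℝ {v l : l ≠ k}) = r for every k. Then, with S = ⋃_k convexHull ℝ {v l : l ≠ k} the union of the facets ((n−1)-skeleton), we have Metric.infDist p S = r, and for every q in the convex hull of {v k : k} with q ≠ p, Metric.infDist q S < r. -/
open Metric EuclideanGeometry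

lemma aux_infDist_proj (n : ℕ) (s : AffineSubspace ℝ (EuclideanSpace ℝ (Fin n))) [Nonempty s]
    (x : EuclideanSpace ℝ (Fin n)) :
    Metric.infDist x (s : Set (EuclideanSpace ℝ (Fin n))) =
      dist x (EuclideanGeometry.orthogonalProjection s x : EuclideanSpace ℝ (Fin n)) := by
  refine le_antisymm (Metric.infDist_le_dist_of_mem (orthogonalProjection_mem x)) ?_
  by_contra h
  push_neg at h
  rw [Metric.infDist_lt_iff ⟨_, (orthogonalProjection_mem x :
      (orthogonalProjection s x : EuclideanSpace ℝ (Fin n)) ∈ s)⟩] at h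
  obtain ⟨y, hy, hlt⟩ := h
  have h2 := dist_sq_eq_dist_orthogonalProjection_sq_add_dist_orthogonalProjection_sq x hy
  have := dist_comm x y
  nlinarith [dist_nonneg (x := y) (y := (orthogonalProjection s x : EuclideanSpace ℝ (Fin n))),
    dist_nonneg (x := x) (y := y),
    dist_nonneg (x := x) (y := (orthogonalProjection s x : EuclideanSpace ℝ (Fin n)))]

lemma aux_key (n : ℕ) (v : Fin (n + 1) → EuclideanSpace ℝ (Fin n))
    (b : AffineBasis (Fin (n + 1)) ℝ (EuclideanSpace ℝ (Fin n))) (hb : ⇑b = v)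
    (k j : Fin (n + 1)) (hj : j ≠ k) (x : EuclideanSpace ℝ (Fin n)) :
    Metric.infDist x (affineSpan ℝ (v '' {l | l ≠ k}) : Set (EuclideanSpace ℝ (Fin n))) =
      |b.coord k x| *
        Metric.infDist (v k) (affineSpan ℝ (v '' {l | l ≠ k}) : Set (EuclideanSpace ℝ (Fin n))) := by
  classical
  set H := affineSpan ℝ (v '' {l | l ≠ k}) with hH
  haveI : Nonempty H := ⟨⟨v j, subset_affineSpan ℝ _ ⟨j, hj, rfl⟩⟩⟩
  let π : EuclideanSpace ℝ (Fin n) →ᵃ[ℝ] EuclideanSpace ℝ (Fin n) :=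
    H.subtype.comp (EuclideanGeometry.orthogonalProjection H)
  have hπ : ∀ z, π z = (EuclideanGeometry.orthogonalProjection H z : EuclideanSpace ℝ (Fin n)) :=
    fun _ => rfl
  have hcomb : ∀ z : EuclideanSpace ℝ (Fin n), z - π z = b.coord k z • (v k - π (v k)) := by
    intro z
    have hw : ∑ i, b.coord i z = 1 := b.sum_coord_apply_eq_one z
    have h1 : (Finset.univ.affineCombination ℝ v fun i => b.coord i z) = z := by
      rw [← hb]; exact b.affineCombination_coord_eq_self z
    have h2 : π z = Finset.univ.affineCombination ℝ (π ∘ v) fun i => b.coord i z := by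
      conv_lhs => rw [← h1]
      exact Finset.map_affineCombination _ _ _ hw π
    have h1' : z = ∑ i, b.coord i z • v i := by
      conv_lhs => rw [← h1]
      exact Finset.univ.affineCombination_eq_linear_combination _ _ hw
    have h2' : π z = ∑ i, b.coord i z • π (v i) := by
      rw [h2]
      exact Finset.univ.affineCombination_eq_linear_combination _ _ hw
    have hkz : b.coord k z • (v k - π (v k)) =
        ∑ i, b.coord i z • (v i - π (v i)) := by
      rw [Finset.sum_eq_single k]
      · intro i _ hik
        have hm : v i ∈ H := subset_affineSpan ℝ _ ⟨i, hik, rfl⟩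
        have : π (v i) = v i := by rw [hπ]; exact orthogonalProjection_eq_self_iff.mpr hm
        rw [this, sub_self, smul_zero]
      · simp
    calc z - π z = (∑ i, b.coord i z • v i) - ∑ i, b.coord i z • π (v i) := by
          rw [← h1', ← h2']
      _ = ∑ i, (b.coord i z • v i - b.coord i z • π (v i)) := by
          rw [Finset.sum_sub_distrib]
      _ = ∑ i, b.coord i z • (v i - π (v i)) := by
          exact Finset.sum_congr rfl fun i _ => (smul_sub _ _ _).symm
      _ = b.coord k z • (v k - π (v k)) := hkz.symm
  have hd : ∀ z : EuclideanSpace ℝ (Fin n), Metric.infDist z (H : Set _) = ‖z - π z‖ := by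
    intro z
    rw [aux_infDist_proj n H z, ← hπ, dist_eq_norm]
  rw [hd x, hd (v k), hcomb x, hcomb (v k), norm_smul]
  have hk1 : b.coord k (v k) = 1 := by rw [← hb]; exact b.coord_apply_eq k
  rw [hk1, one_smul, Real.norm_eq_abs]

lemma aux_mem_facet (n : ℕ) (v : Fin (n + 1) → EuclideanSpace ℝ (Fin n))
    (b : AffineBasis (Fin (n + 1)) ℝ (EuclideanSpace ℝ (Fin n))) (hb : ⇑b = v)
    (j : Fin (n + 1)) (z : EuclideanSpace ℝ (Fin n)) (h0 : ∀ i, 0 ≤ b.coord i z)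
    (hj : b.coord j z = 0) : z ∈ convexHull ℝ (v '' {l | l ≠ j}) := by
  classical
  have hw : ∑ i, b.coord i z = 1 := b.sum_coord_apply_eq_one z
  have hsum : ∑ i ∈ Finset.univ.erase j, b.coord i z = 1 := by
    exact (Finset.sum_erase (f := fun i => b.coord i z) Finset.univ hj).trans hw
  have hz : ((Finset.univ.erase j).affineCombination ℝ v fun i => b.coord i z) = z := by
    have hind : (Set.indicator (↑(Finset.univ.erase j)) fun i => b.coord i z) =
        fun i => b.coord i z := by
      funext i
      by_cases hij : i = j
      · subst hij; simp [Set.indicator, hj]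
      · simp [Set.indicator, hij]
    rw [Finset.affineCombination_indicator_subset _ _ (Finset.subset_univ _), hind, ← hb]
    exact b.affineCombination_coord_eq_self z
  rw [← hz, affineCombination_eq_centerMass hsum]
  refine Finset.centerMass_mem_convexHull _ (fun i _ => h0 i) (by rw [hsum]; norm_num) ?_
  intro i hi
  exact ⟨i, (Finset.mem_erase.mp hi).1, rfl⟩

lemma aux_seg (n : ℕ) (v : Fin (n + 1) → EuclideanSpace ℝ (Fin n))
    (b : AffineBasis (Fin (n + 1)) ℝ (EuclideanSpace ℝ (Fin n))) (hb : ⇑b = v)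
    (k : Fin (n + 1)) (q y : EuclideanSpace ℝ (Fin n))
    (hq : ∀ i, 0 ≤ b.coord i q) (hyk : b.coord k y = 0) :
    ∃ z, z ∈ (⋃ m, convexHull ℝ (v '' {l | l ≠ m})) ∧ dist q z ≤ dist q y := by
  classical
  by_cases hy : ∀ i, 0 ≤ b.coord i y
  · exact ⟨y, Set.mem_iUnion.mpr ⟨k, aux_mem_facet n v b hb k y hy hyk⟩, le_refl _⟩
  · set c : ℝ → EuclideanSpace ℝ (Fin n) := fun t => AffineMap.lineMap q y t with hc
    have hcont : Continuous c := by
      have : c = fun t => t • (y - q) + q := by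
        funext t
        simp [hc, AffineMap.lineMap_apply, vsub_eq_sub, vadd_eq_add]
      rw [this]
      exact (continuous_id.smul continuous_const).add continuous_const
    set T : Set ℝ := {t | t ∈ Set.Icc (0 : ℝ) 1 ∧ ∀ i, 0 ≤ b.coord i (c t)} with hT
    have hc0 : c 0 = q := by simp [hc]
    have hc1 : c 1 = y := by simp [hc]
    have hT0 : (0 : ℝ) ∈ T := ⟨⟨le_refl 0, zero_le_one⟩, by rw [hc0]; exact hq⟩
    have hTeq : T = Set.Icc (0 : ℝ) 1 ∩ ⋂ i, (fun t => b.coord i (c t)) ⁻¹' Set.Ici 0 := by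
      ext t
      simp only [hT, Set.mem_setOf_eq, Set.mem_inter_iff, Set.mem_iInter, Set.mem_preimage,
        Set.mem_Ici]
    have hTclosed : IsClosed T := by
      rw [hTeq]
      exact isClosed_Icc.inter (isClosed_iInter fun i =>
        IsClosed.preimage ((continuous_barycentric_coord b i).comp hcont) isClosed_Ici)
    have hTcp : IsCompact T := isCompact_Icc.of_isClosed_subset hTclosed fun t ht => ht.1
    set t₀ := sSup T with ht₀
    have ht₀T : t₀ ∈ T := hTcp.sSup_mem ⟨0, hT0⟩
    set z := c t₀ with hz
    have hzpos : ∀ i, 0 ≤ b.coord i z := ht₀T.2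
    have ht₀0 : 0 ≤ t₀ := ht₀T.1.1
    have ht₀1 : t₀ ≤ 1 := ht₀T.1.2
    have ht₀lt : t₀ < 1 := by
      rcases lt_or_eq_of_le ht₀1 with h | h
      · exact h
      · exfalso
        apply hy
        intro i
        have := hzpos i
        rwa [hz, h, hc1] at this
    have hex : ∃ j, b.coord j z = 0 := by
      by_contra hno
      push_neg at hno
      have hpos : ∀ i, 0 < b.coord i z := fun i => lt_of_le_of_ne (hzpos i) (Ne.symm (hno i))
      set U : Set ℝ := ⋂ i, (fun t => b.coord i (c t)) ⁻¹' Set.Ioi 0 with hU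
      have hUopen : IsOpen U := isOpen_iInter_of_finite fun i =>
        IsOpen.preimage ((continuous_barycentric_coord b i).comp hcont) isOpen_Ioi
      have ht₀U : t₀ ∈ U := Set.mem_iInter.mpr fun i => hpos i
      obtain ⟨ε, hε, hball⟩ := Metric.isOpen_iff.mp hUopen t₀ ht₀U
      set t₁ := min 1 (t₀ + ε / 2) with ht₁
      have ht₁gt : t₀ < t₁ := lt_min ht₀lt (by linarith)
      have ht₁ball : t₁ ∈ Metric.ball t₀ ε := by
        rw [Metric.mem_ball, Real.dist_eq, abs_of_pos (by linarith)]
        have : t₁ ≤ t₀ + ε / 2 := min_le_right _ _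
        linarith
      have ht₁T : t₁ ∈ T := by
        refine ⟨⟨by linarith, min_le_left _ _⟩, fun i => ?_⟩
        have := Set.mem_iInter.mp (hball ht₁ball) i
        exact le_of_lt this
      have := le_csSup hTcp.bddAbove ht₁T
      linarith
    obtain ⟨j, hjz⟩ := hex
    refine ⟨z, Set.mem_iUnion.mpr ⟨j, aux_mem_facet n v b hb j z hzpos hjz⟩, ?_⟩
    have hdist : dist z q = ‖t₀‖ * dist q y := dist_lineMap_left q y t₀
    rw [dist_comm q z, hdist]
    have : ‖t₀‖ ≤ 1 := by rw [Real.norm_eq_abs, abs_of_nonneg ht₀0]; exact ht₀1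
    exact mul_le_of_le_one_left dist_nonneg this

/-- The incenter is the unique maximizer of the distance to the `(n-1)`-skeleton: the
equidistant point `p` is at distance `r` from the union of the facets, and every other
point of the simplex is strictly closer to the skeleton. -/
theorem stmt_17 (n : ℕ) (hn : 1 ≤ n)
    (v : Fin (n + 1) → EuclideanSpace ℝ (Fin n))
    (hv : AffineIndependent ℝ v)
    (p : EuclideanSpace ℝ (Fin n))
    (hp : p ∈ convexHull ℝ (Set.range v))
    (r : ℝ) (hr : 0 ≤ r)
    (heq : ∀ k, Metric.infDist p
        (affineSpan ℝ (v '' {l | l ≠ k}) : Set (EuclideanSpace ℝ (Fin n))) = r) :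
    Metric.infDist p (⋃ k, convexHull ℝ (v '' {l | l ≠ k})) = r ∧
      ∀ q ∈ convexHull ℝ (Set.range v), q ≠ p →
        Metric.infDist q (⋃ k, convexHull ℝ (v '' {l | l ≠ k})) < r := by
  classical
  have htop : affineSpan ℝ (Set.range v) = ⊤ := by
    rw [hv.affineSpan_eq_top_iff_card_eq_finrank_add_one]
    simp [finrank_euclideanSpace_fin]
  let b : AffineBasis (Fin (n + 1)) ℝ (EuclideanSpace ℝ (Fin n)) := ⟨v, hv, htop⟩
  have hb : ⇑b = v := rfl
  haveI : Nontrivial (Fin (n + 1)) := by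
    apply Fin.nontrivial_iff_two_le.mpr; omega
  have hexj : ∀ k : Fin (n + 1), ∃ j, j ≠ k := fun k => exists_ne k
  set H : Fin (n + 1) → AffineSubspace ℝ (EuclideanSpace ℝ (Fin n)) :=
    fun k => affineSpan ℝ (v '' {l | l ≠ k}) with hH
  set d : Fin (n + 1) → ℝ := fun k => Metric.infDist (v k) (H k : Set _) with hd
  have key : ∀ k x, Metric.infDist x (H k : Set _) = |b.coord k x| * d k := by
    intro k x
    obtain ⟨j, hj⟩ := hexj k
    exact aux_key n v b hb k j hj x
  have hvknot : ∀ k, v k ∉ H k := by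
    intro k
    have h := hv.notMem_affineSpan_diff k Set.univ
    have hset : (Set.univ \ {k} : Set (Fin (n + 1))) = {l | l ≠ k} := by ext; simp
    rwa [hset] at h
  have hdpos : ∀ k, 0 < d k := by
    intro k
    obtain ⟨j, hj⟩ := hexj k
    have hne : (H k : Set (EuclideanSpace ℝ (Fin n))).Nonempty :=
      ⟨v j, subset_affineSpan ℝ _ ⟨j, hj, rfl⟩⟩
    have hcl : IsClosed (H k : Set (EuclideanSpace ℝ (Fin n))) :=
      (H k).closed_of_finiteDimensional
    exact (hcl.notMem_iff_infDist_pos hne).mp (hvknot k)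
  have hcoordH : ∀ k y, y ∈ H k → b.coord k y = 0 := by
    intro k y hy
    have h0 : Metric.infDist y (H k : Set _) = 0 := Metric.infDist_zero_of_mem hy
    rw [key k y] at h0
    rcases mul_eq_zero.mp h0.symm.symm with h | h
    · exact abs_eq_zero.mp h
    · exact absurd h (ne_of_gt (hdpos k))
  have hCcoord : ∀ x, x ∈ convexHull ℝ (Set.range v) ↔ ∀ i, 0 ≤ b.coord i x := by
    intro x
    have h := b.convexHull_eq_nonneg_coord
    rw [hb] at h
    rw [h]
    rfl
  have hpC : ∀ i, 0 ≤ b.coord i p := (hCcoord p).mp hp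
  have hkey_p : ∀ k, b.coord k p * d k = r := by
    intro k
    have h := heq k
    rwa [key k p, abs_of_nonneg (hpC k)] at h
  have hrpos : 0 < r := by
    rcases hr.lt_or_eq with h | h
    · exact h
    · exfalso
      have hz : ∀ k, b.coord k p = 0 := by
        intro k
        have h1 := hkey_p k
        rw [← h] at h1
        rcases mul_eq_zero.mp h1 with h2 | h2
        · exact h2
        · exact absurd h2 (ne_of_gt (hdpos k))
      have hsum := b.sum_coord_apply_eq_one p
      simp [hz] at hsum
  have hSne : (⋃ m, convexHull ℝ (v '' {l | l ≠ m})).Nonempty := by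
    obtain ⟨j, hj⟩ := hexj 0
    exact ⟨v j, Set.mem_iUnion.mpr ⟨0, subset_convexHull ℝ _ ⟨j, hj, rfl⟩⟩⟩
  have hub : ∀ q : EuclideanSpace ℝ (Fin n), (∀ i, 0 ≤ b.coord i q) → ∀ k,
      Metric.infDist q (⋃ m, convexHull ℝ (v '' {l | l ≠ m})) ≤ b.coord k q * d k := by
    intro q hq k
    obtain ⟨j, hj⟩ := hexj k
    haveI : Nonempty (H k) := ⟨⟨v j, subset_affineSpan ℝ _ ⟨j, hj, rfl⟩⟩⟩
    set y : EuclideanSpace ℝ (Fin n) :=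
      (EuclideanGeometry.orthogonalProjection (H k) q : EuclideanSpace ℝ (Fin n)) with hy
    have hyH : y ∈ H k := (EuclideanGeometry.orthogonalProjection (H k) q).2
    have hdist : dist q y = b.coord k q * d k := by
      rw [hy, ← aux_infDist_proj n (H k) q, key k q, abs_of_nonneg (hq k)]
    obtain ⟨z, hzS, hz⟩ := aux_seg n v b hb k q y hq (hcoordH k y hyH)
    exact le_trans (Metric.infDist_le_dist_of_mem hzS) (by rw [← hdist]; exact hz)
  have hlb : r ≤ Metric.infDist p (⋃ m, convexHull ℝ (v '' {l | l ≠ m})) := by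
    by_contra hcon
    push_neg at hcon
    rw [Metric.infDist_lt_iff hSne] at hcon
    obtain ⟨w, hwS, hwlt⟩ := hcon
    obtain ⟨m, hm⟩ := Set.mem_iUnion.mp hwS
    have hwH : w ∈ H m := by
      have hsub : convexHull ℝ (v '' {l | l ≠ m}) ⊆ (H m : Set _) :=
        convexHull_min (subset_affineSpan ℝ _) (H m).convex
      exact hsub hm
    have h := Metric.infDist_le_dist_of_mem (x := p) hwH
    rw [heq m] at h
    linarith
  have h1 : Metric.infDist p (⋃ m, convexHull ℝ (v '' {l | l ≠ m})) = r := by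
    refine le_antisymm ?_ hlb
    have h := hub p hpC 0
    rwa [hkey_p 0] at h
  refine ⟨h1, ?_⟩
  intro q hqC hqp
  have hqc : ∀ i, 0 ≤ b.coord i q := (hCcoord q).mp hqC
  have hex : ∃ k, b.coord k q < b.coord k p := by
    by_contra hcon
    push_neg at hcon
    have heqc : ∀ k, b.coord k q = b.coord k p := by
      intro k
      by_contra hne
      have hlt : b.coord k p < b.coord k q := lt_of_le_of_ne (hcon k) (Ne.symm hne)
      have hs1 := b.sum_coord_apply_eq_one q
      have hs2 := b.sum_coord_apply_eq_one p
      have hlt2 : ∑ i, b.coord i p < ∑ i, b.coord i q :=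
        Finset.sum_lt_sum (fun i _ => hcon i) ⟨k, Finset.mem_univ k, hlt⟩
      rw [hs1, hs2] at hlt2
      exact lt_irrefl _ hlt2
    exact hqp (b.ext_elem heqc)
  obtain ⟨k, hk⟩ := hex
  calc Metric.infDist q (⋃ m, convexHull ℝ (v '' {l | l ≠ m}))
      ≤ b.coord k q * d k := hub q hqc k
    _ < b.coord k p * d k := by
        have := hdpos k
        exact mul_lt_mul_of_pos_right hk this
    _ = r := hkey_p k
end

section
/- Let n ≥ 1 and let v : Fin (n+1) → EuclideanSpace ℝ (Fin n) be unit vectors (‖v k‖ = 1 for all k) with ∑_k v_k = 0 and ⟪v i, v j⟫ = −1/n for all i ≠ j. Then for every index k, the distance from the origin to the k-th facet hyperplane equals 1/n: Metric.infDist 0 (affineSpan ℝ {v j : j ≠ k}) = 1/n. -/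
/-- For the regular simplex inscribed in the unit sphere (unit vertices summing to `0`
with pairwise inner products `-1/n`), the distance from the origin to every facet
hyperplane equals `1/n`. -/
theorem stmt_18 (n : ℕ) (hn : 1 ≤ n)
    (v : Fin (n + 1) → EuclideanSpace ℝ (Fin n))
    (hnorm : ∀ k, ‖v k‖ = 1)
    (hsum : ∑ k, v k = 0)
    (hinner : ∀ i j : Fin (n + 1), i ≠ j → (inner ℝ (v i) (v j) : ℝ) = -1 / n) :
    ∀ k, Metric.infDist 0
        (affineSpan ℝ (v '' {j | j ≠ k}) : Set (EuclideanSpace ℝ (Fin n))) = 1 / n := by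
  intro k
  have hn0 : (n : ℝ) ≠ 0 := by positivity
  classical
  -- the foot of the perpendicular
  set p : EuclideanSpace ℝ (Fin n) := (-(1 / n) : ℝ) • v k with hp
  -- restriction of v to indices ≠ k
  set u : {j : Fin (n + 1) // j ≠ k} → EuclideanSpace ℝ (Fin n) := fun j => v j with hu
  have hrange : Set.range u = v '' {j | j ≠ k} := by
    rw [hu]
    ext x
    constructor
    · rintro ⟨⟨j, hj⟩, rfl⟩; exact ⟨j, hj, rfl⟩
    · rintro ⟨j, hj, rfl⟩; exact ⟨⟨j, hj⟩, rfl⟩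
  have hcard : (Fintype.card {j : Fin (n + 1) // j ≠ k} : ℝ) = (n : ℝ) := by
    have : Fintype.card {j : Fin (n + 1) // j ≠ k} = n := by
      simp [Fintype.card_subtype_compl]
    rw [this]
  -- p is an affine combination of the u's
  have hw : ∑ _j : {j : Fin (n + 1) // j ≠ k}, (1 / n : ℝ) = 1 := by
    rw [Finset.sum_const, Finset.card_univ, nsmul_eq_mul, hcard]
    field_simp
  have hsum' : ∑ j : {j : Fin (n + 1) // j ≠ k}, u j = -(v k) := by
    have := Fintype.sum_eq_sum_compl_add k v
    rw [hsum] at this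
    have h2 : ∑ j ∈ {k}ᶜ, v j = -(v k) := by
      have : ∑ j ∈ {k}ᶜ, v j + v k = 0 := this.symm
      linear_combination (norm := abel) this
    rw [hu]
    rw [← h2]
    exact ((Finset.sum_subtype {k}ᶜ (fun i => Finset.mem_compl.trans (by simp)) v)).symm
  have hcomb : Finset.univ.affineCombination ℝ u (fun _ => (1 / n : ℝ)) = p := by
    rw [Finset.univ.affineCombination_eq_linear_combination u _ hw, hp]
    rw [← Finset.smul_sum, hsum']
    rw [smul_neg, neg_smul]
  have hpmem : p ∈ affineSpan ℝ (v '' {j | j ≠ k}) := by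
    rw [← hrange, ← hcomb]
    exact affineCombination_mem_affineSpan hw u
  have hnormp : ‖p‖ = 1 / n := by
    rw [hp, norm_smul, hnorm k]
    simp [abs_of_nonneg (by positivity : (0:ℝ) ≤ 1 / (n:ℝ))]
  -- every point of the affine span has inner product -1/n with v k
  have hinner_span : ∀ x ∈ (affineSpan ℝ (v '' {j | j ≠ k}) : Set (EuclideanSpace ℝ (Fin n))),
      (inner ℝ (v k) x : ℝ) = -1 / n := by
    intro x hx
    -- the hyperplane as an affine subspace: preimage of {-1/n} under inner (v k) ·
    let f : EuclideanSpace ℝ (Fin n) →ᵃ[ℝ] ℝ :=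
      ((innerₗ (EuclideanSpace ℝ (Fin n))) (v k)).toAffineMap
    have hQ : affineSpan ℝ (v '' {j | j ≠ k}) ≤
        AffineSubspace.comap f (affineSpan ℝ ({(-1 / (n:ℝ))} : Set ℝ)) := by
      rw [affineSpan_le]
      rintro y ⟨j, hj, rfl⟩
      show f (v j) ∈ (affineSpan ℝ ({(-1 / (n:ℝ))} : Set ℝ) : Set ℝ)
      have : f (v j) = (-1 / n : ℝ) := by
        show (inner ℝ (v k) (v j) : ℝ) = -1 / n
        exact hinner k j (Ne.symm hj)
      rw [this]
      exact subset_affineSpan ℝ _ rfl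
    have := hQ hx
    have hmem : f x ∈ (affineSpan ℝ ({(-1 / (n:ℝ))} : Set ℝ) : Set ℝ) := this
    rw [AffineSubspace.coe_affineSpan_singleton] at hmem
    exact Set.mem_singleton_iff.mp hmem
  -- upper bound
  have hub : Metric.infDist 0
      (affineSpan ℝ (v '' {j | j ≠ k}) : Set (EuclideanSpace ℝ (Fin n))) ≤ 1 / n := by
    calc Metric.infDist 0 (affineSpan ℝ (v '' {j | j ≠ k}) : Set (EuclideanSpace ℝ (Fin n)))
        ≤ dist 0 p := Metric.infDist_le_dist_of_mem hpmem
      _ = ‖p‖ := by rw [dist_comm, dist_zero_right]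
      _ = 1 / n := hnormp
  -- lower bound
  have hlb : (1 / n : ℝ) ≤ Metric.infDist 0
      (affineSpan ℝ (v '' {j | j ≠ k}) : Set (EuclideanSpace ℝ (Fin n))) := by
    by_contra hlt
    push_neg at hlt
    obtain ⟨y, hy, hdy⟩ := (Metric.infDist_lt_iff ⟨p, hpmem⟩).mp hlt
    have h1 : (inner ℝ (v k) y : ℝ) = -1 / n := hinner_span y hy
    have h2 : (1 / n : ℝ) ≤ ‖y‖ := by
      have := abs_real_inner_le_norm (v k) y
      rw [h1, hnorm k, one_mul] at this
      calc (1 / n : ℝ) = |(-1 / n : ℝ)| := by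
            rw [abs_div, abs_neg, abs_one, abs_of_nonneg (Nat.cast_nonneg n)]
        _ ≤ ‖y‖ := this
    rw [dist_comm, dist_zero_right] at hdy
    linarith
  linarith
end

section
/- For every n ≥ 1 there exists a family v : Fin (n+1) → EuclideanSpace ℝ (Fin n) of unit vectors (‖v k‖ = 1 for all k) such that ⟪v i, v j⟫ = −1/n for all i ≠ j; moreover any such family satisfies ∑_k v_k = 0 and is affinely independent. -/
/-- The common part: any family of unit vectors with pairwise inner products `-1/n`
(in any real inner product space) sums to zero and is affinely independent. -/
lemma regular_simplex_aux {F : Type*} [NormedAddCommGroup F] [InnerProductSpace ℝ F]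
    (n : ℕ) (hn : 1 ≤ n) (v : Fin (n + 1) → F)
    (hnorm : ∀ k, ‖v k‖ = 1)
    (hinner : ∀ i j : Fin (n + 1), i ≠ j → (inner ℝ (v i) (v j) : ℝ) = -1 / n) :
    ∑ k, v k = 0 ∧ AffineIndependent ℝ v := by
  have hn' : (n : ℝ) ≠ 0 := Nat.cast_ne_zero.2 (by omega)
  have hG : ∀ i j : Fin (n + 1), (inner ℝ (v i) (v j) : ℝ) =
      if i = j then 1 else -1 / (n : ℝ) := by
    intro i j
    by_cases h : i = j
    · subst h; simp [real_inner_self_eq_norm_sq, hnorm i]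
    · simp [h, hinner i j h]
  constructor
  · have h0 : (inner ℝ (∑ k, v k) (∑ k, v k) : ℝ) = 0 := by
      rw [sum_inner]
      rw [Finset.sum_eq_zero]
      intro i _
      rw [inner_sum]
      have : ∀ j : Fin (n + 1), (inner ℝ (v i) (v j) : ℝ) =
          (if j = i then 1 + 1 / (n : ℝ) else 0) + (-1 / (n : ℝ)) := by
        intro j
        rw [hG]
        by_cases h : i = j
        · subst h; simp; field_simp; ring
        · have h' : j ≠ i := fun hh => h hh.symm
          simp [h, h']
      rw [Finset.sum_congr rfl fun j _ => this j, Finset.sum_add_distrib,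
        Finset.sum_ite_eq' Finset.univ i, Finset.sum_const]
      simp only [Finset.mem_univ, if_true, Finset.card_univ, Fintype.card_fin]
      push_cast
      field_simp
      ring_nf
      rw [pow_two, mul_assoc, mul_inv_cancel₀ hn']
      ring
    exact inner_self_eq_zero.mp h0
  · rw [affineIndependent_iff]
    intro s w hw hvw j hj
    -- extend w by zero off s
    set W : Fin (n + 1) → ℝ := fun i => if i ∈ s then w i else 0 with hW
    have hWsum : ∑ i, W i = 0 := by
      rw [hW, Finset.sum_ite_mem, Finset.univ_inter]; exact hw
    have hWv : ∑ i, W i • v i = 0 := by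
      simp only [hW, ite_smul, zero_smul, Finset.sum_ite_mem, Finset.univ_inter]
      exact hvw
    have h0 : (inner ℝ (∑ i, W i • v i) (v j) : ℝ) = 0 := by rw [hWv]; simp
    rw [sum_inner] at h0
    simp only [real_inner_smul_left] at h0
    have key : ∑ i, W i * (inner ℝ (v i) (v j) : ℝ)
        = W j * (1 + 1 / (n : ℝ)) + (∑ i, W i) * (-1 / (n : ℝ)) := by
      have : ∀ i : Fin (n + 1), W i * (inner ℝ (v i) (v j) : ℝ) =
          (if i = j then W i * (1 + 1 / (n : ℝ)) else 0) + W i * (-1 / (n : ℝ)) := by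
        intro i
        rw [hG]
        by_cases h : i = j
        · subst h; simp; ring
        · simp [h]
      rw [Finset.sum_congr rfl fun i _ => this i, Finset.sum_add_distrib,
        Finset.sum_ite_eq' Finset.univ j, ← Finset.sum_mul]
      simp
    rw [key, hWsum] at h0
    have h1 : (1 : ℝ) + 1 / n ≠ 0 := by positivity
    have : W j = 0 := by
      have h0' : W j * (1 + 1 / (n : ℝ)) = 0 := by simpa using h0
      rcases mul_eq_zero.mp h0' with h | h
      · exact h
      · exact absurd h h1
    rw [hW] at this
    simpa [hj] using this

set_option maxHeartbeats 1000000 in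
/-- Existence of the regular simplex inscribed in the unit sphere: there is a family of
`n+1` unit vectors with pairwise inner products `-1/n`; moreover any such family sums to
`0` and is affinely independent. -/
theorem stmt_19 (n : ℕ) (hn : 1 ≤ n) :
    (∃ v : Fin (n + 1) → EuclideanSpace ℝ (Fin n),
        (∀ k, ‖v k‖ = 1) ∧
          ∀ i j : Fin (n + 1), i ≠ j → (inner ℝ (v i) (v j) : ℝ) = -1 / n) ∧
      ∀ v : Fin (n + 1) → EuclideanSpace ℝ (Fin n),
        (∀ k, ‖v k‖ = 1) →
          (∀ i j : Fin (n + 1), i ≠ j → (inner ℝ (v i) (v j) : ℝ) = -1 / n) →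
            ∑ k, v k = 0 ∧ AffineIndependent ℝ v := by
  refine ⟨?_, fun v h1 h2 => regular_simplex_aux n hn v h1 h2⟩
  have hn' : (n : ℝ) ≠ 0 := Nat.cast_ne_zero.2 (by omega)
  have hn1 : ((n : ℝ) + 1) ≠ 0 := by positivity
  -- work in ℝ^{n+1}
  set c : EuclideanSpace ℝ (Fin (n + 1)) := WithLp.toLp 2 (fun _ => 1 / ((n : ℝ) + 1)) with hc
  set w : Fin (n + 1) → EuclideanSpace ℝ (Fin (n + 1)) :=
    fun i => EuclideanSpace.single i 1 - c with hwdef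
  have hcc : (inner ℝ c c : ℝ) = 1 / ((n : ℝ) + 1) := by
    rw [PiLp.inner_apply]
    simp only [hc, PiLp.toLp_apply, RCLike.inner_apply, conj_trivial]
    rw [Finset.sum_const, Finset.card_univ, Fintype.card_fin]
    rw [nsmul_eq_mul]
    push_cast
    field_simp
  have hec : ∀ i : Fin (n + 1), (inner ℝ (EuclideanSpace.single i (1 : ℝ)) c : ℝ)
      = 1 / ((n : ℝ) + 1) := by
    intro i
    rw [EuclideanSpace.inner_single_left]
    simp [hc]
  have hce : ∀ i : Fin (n + 1), (inner ℝ c (EuclideanSpace.single i (1 : ℝ)) : ℝ)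
      = 1 / ((n : ℝ) + 1) := by
    intro i
    rw [real_inner_comm]; exact hec i
  have hee : ∀ i j : Fin (n + 1),
      (inner ℝ (EuclideanSpace.single i (1 : ℝ)) (EuclideanSpace.single j (1 : ℝ)) : ℝ)
      = if i = j then 1 else 0 := by
    intro i j
    rw [EuclideanSpace.inner_single_left]
    simp [EuclideanSpace.single_apply, eq_comm]
  have hww : ∀ i j : Fin (n + 1), (inner ℝ (w i) (w j) : ℝ)
      = (if i = j then 1 else 0) - 1 / ((n : ℝ) + 1) := by
    intro i j
    rw [hwdef]
    simp only [inner_sub_left, inner_sub_right]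
    rw [hee, hec, hce, hcc]
    ring
  -- the hyperplane of zero-sum vectors
  set L : EuclideanSpace ℝ (Fin (n + 1)) →ₗ[ℝ] ℝ :=
    { toFun := fun x => ∑ i, x i
      map_add' := fun x y => by
        simp [PiLp.add_apply, Finset.sum_add_distrib]
      map_smul' := fun r x => by
        simp [PiLp.smul_apply, Finset.mul_sum] } with hL
  have hLw : ∀ i, w i ∈ LinearMap.ker L := by
    intro i
    rw [LinearMap.mem_ker]
    show ∑ k, (w i) k = 0
    have : ∀ k, (w i) k = (if k = i then 1 else 0) - 1 / ((n : ℝ) + 1) := by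
      intro k
      simp [hwdef, hc, EuclideanSpace.single_apply, PiLp.sub_apply]
    rw [Finset.sum_congr rfl fun k _ => this k, Finset.sum_sub_distrib,
      Finset.sum_ite_eq' Finset.univ i, Finset.sum_const, Finset.card_univ,
      Fintype.card_fin]
    rw [if_pos (Finset.mem_univ i), nsmul_eq_mul]
    push_cast
    field_simp
    ring
  have hrank : Module.finrank ℝ (LinearMap.ker L) = n := by
    have hsurj : LinearMap.range L = ⊤ := by
      rw [LinearMap.range_eq_top]
      intro r
      refine ⟨r • EuclideanSpace.single 0 1, ?_⟩
      show ∑ i, (r • EuclideanSpace.single (0 : Fin (n+1)) (1:ℝ)) i = r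
      simp [PiLp.smul_apply, EuclideanSpace.single_apply, Finset.mul_sum]
    have h1 := LinearMap.finrank_range_add_finrank_ker L
    rw [hsurj, finrank_top, finrank_euclideanSpace_fin, Module.finrank_self] at h1
    omega
  set b : OrthonormalBasis (Fin n) ℝ (LinearMap.ker L) :=
    (stdOrthonormalBasis ℝ (LinearMap.ker L)).reindex (finCongr hrank) with hb
  set T := b.repr with hT
  set r : ℝ := Real.sqrt (((n : ℝ) + 1) / n) with hr
  have hr2 : r * r = ((n : ℝ) + 1) / n :=
    Real.mul_self_sqrt (by positivity)
  have hinner : ∀ i j : Fin (n + 1),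
        (inner ℝ (T ⟨r • w i, Submodule.smul_mem _ r (hLw i)⟩)
          (T ⟨r • w j, Submodule.smul_mem _ r (hLw j)⟩) : ℝ)
        = if i = j then 1 else -1 / (n : ℝ) := by
      intro i j
      rw [T.inner_map_map]
      rw [Submodule.coe_inner]
      show (inner ℝ (r • w i) (r • w j) : ℝ) = _
      rw [real_inner_smul_left, real_inner_smul_right, ← mul_assoc, hr2, hww]
      by_cases h : i = j
      · subst h
        rw [if_pos rfl, if_pos rfl]
        field_simp
        ring
      · simp only [h, if_false]
        field_simp
        ring
  refine ⟨fun i => T ⟨r • w i, Submodule.smul_mem _ r (hLw i)⟩, fun k => ?_, fun i j hij => ?_⟩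
  · have h1 : (inner ℝ (T ⟨r • w k, Submodule.smul_mem _ r (hLw k)⟩)
        (T ⟨r • w k, Submodule.smul_mem _ r (hLw k)⟩) : ℝ) = 1 := by
      simpa using hinner k k
    have h2 : ‖T ⟨r • w k, Submodule.smul_mem _ r (hLw k)⟩‖
        * ‖T ⟨r • w k, Submodule.smul_mem _ r (hLw k)⟩‖ = 1 := by
      rw [← real_inner_self_eq_norm_mul_norm, h1]
    rcases mul_self_eq_one_iff.mp h2 with h | h
    · exact h
    · linarith [norm_nonneg (T ⟨r • w k, Submodule.smul_mem _ r (hLw k)⟩)]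
  · have h := hinner i j
    rw [if_neg hij] at h
    exact h
end
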